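/- arXiv:2310.14616 — 2 statements merged into one kernel-verified Lean document; each statement's English description precedes it below -/
import Mathlib

section
/- Let Y ∈ ℝ^{d×d} be symmetric and nonzero, and set a = √(‖Y‖_op/2)/2 > 0. Define D(x) = (1/2)‖x xᵀ − Y‖_F². Then for every x ∈ ℝ^d, ‖∇²D(x)‖_op ≤ (3/a)‖∇D(x)‖ + 20a², where ∇D(x) = (x xᵀ − Y)x and ∇²D(x) = ‖x‖² I + 2x xᵀ − Y. -/
set_option maxHeartbeats 2000000 in
theorem stmt_4 {d : ℕ} (Y : Matrix (Fin d) (Fin d) ℝ) (hY : Y.IsSymm) (hY0 : Y ≠ 0)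
    (a : ℝ) (ha : a = Real.sqrt (‖Matrix.toEuclideanCLM (𝕜 := ℝ) Y‖ / 2) / 2)
    (x : EuclideanSpace ℝ (Fin d)) :
    ‖Matrix.toEuclideanCLM (𝕜 := ℝ)
        (‖x‖ ^ 2 • (1 : Matrix (Fin d) (Fin d) ℝ)
          + (2 : ℝ) • Matrix.vecMulVec (x : Fin d → ℝ) (x : Fin d → ℝ) - Y)‖ ≤
      (3 / a) * ‖‖x‖ ^ 2 • x - Matrix.toEuclideanCLM (𝕜 := ℝ) Y x‖ + 20 * a ^ 2 := by
  set L : ℝ := ‖Matrix.toEuclideanCLM (𝕜 := ℝ) Y‖ with hLdef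
  have hL0 : 0 < L := by
    rw [hLdef, norm_pos_iff]
    intro h
    exact hY0 ((Matrix.toEuclideanCLM (𝕜 := ℝ) (n := Fin d)).injective (by simpa using h))
  have ha0 : 0 < a := by
    rw [ha]
    have := Real.sqrt_pos.mpr (by linarith : (0:ℝ) < L / 2)
    linarith
  have hL8 : L = 8 * a ^ 2 := by
    have h2 : a ^ 2 = L / 8 := by
      rw [ha, div_pow, Real.sq_sqrt (by linarith : (0:ℝ) ≤ L / 2)]
      ring
    linarith
  set T := ‖x‖ with hTdef
  have hT0 : 0 ≤ T := norm_nonneg x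
  set g := T ^ 2 • x - Matrix.toEuclideanCLM (𝕜 := ℝ) Y x with hg
  set G := ‖g‖ with hGdef
  have hG0 : 0 ≤ G := norm_nonneg g
  have hYle : ∀ v : EuclideanSpace ℝ (Fin d),
      ‖Matrix.toEuclideanCLM (𝕜 := ℝ) Y v‖ ≤ L * ‖v‖ := fun v =>
    (Matrix.toEuclideanCLM (𝕜 := ℝ) Y).le_opNorm v
  have hGlb : T ^ 3 - L * T ≤ G := by
    have h1 : ‖(T ^ 2 : ℝ) • x‖ = T ^ 3 := by
      rw [norm_smul, Real.norm_eq_abs, abs_of_nonneg (sq_nonneg T)]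
      ring
    have h2 := norm_sub_norm_le ((T ^ 2 : ℝ) • x) (Matrix.toEuclideanCLM (𝕜 := ℝ) Y x)
    have h3 := hYle x
    rw [h1] at h2
    rw [hGdef, hg]
    linarith
  -- application of the Hessian matrix
  have hvmv : ∀ v : EuclideanSpace ℝ (Fin d),
      Matrix.toEuclideanCLM (𝕜 := ℝ) (Matrix.vecMulVec (x : Fin d → ℝ) (x : Fin d → ℝ)) v
        = (inner ℝ x v : ℝ) • x := by
    intro v
    ext i
    show (Matrix.vecMulVec (x : Fin d → ℝ) (x : Fin d → ℝ)).mulVec (v : Fin d → ℝ) i = _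
    simp [Matrix.mulVec, Matrix.vecMulVec_apply, dotProduct, PiLp.inner_apply,
      RCLike.inner_apply, Finset.sum_mul, Finset.mul_sum]
    ring_nf
    congr 1
    ext j
    ring
  have hM : ∀ v : EuclideanSpace ℝ (Fin d),
      Matrix.toEuclideanCLM (𝕜 := ℝ)
        (T ^ 2 • (1 : Matrix (Fin d) (Fin d) ℝ)
          + (2 : ℝ) • Matrix.vecMulVec (x : Fin d → ℝ) (x : Fin d → ℝ) - Y) v
        = T ^ 2 • v + (2 * (inner ℝ x v : ℝ)) • x - Matrix.toEuclideanCLM (𝕜 := ℝ) Y v := by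
    intro v
    simp only [map_sub, map_add, map_smul, map_one, ContinuousLinearMap.sub_apply,
      ContinuousLinearMap.add_apply, ContinuousLinearMap.coe_smul', Pi.smul_apply,
      ContinuousLinearMap.one_apply, hvmv v, smul_smul]
  set N := ‖Matrix.toEuclideanCLM (𝕜 := ℝ)
        (T ^ 2 • (1 : Matrix (Fin d) (Fin d) ℝ)
          + (2 : ℝ) • Matrix.vecMulVec (x : Fin d → ℝ) (x : Fin d → ℝ) - Y)‖ with hN
  have hcrude : N ≤ 3 * T ^ 2 + L := by
    apply ContinuousLinearMap.opNorm_le_bound _ (by nlinarith [sq_nonneg T])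
    intro v
    rw [hM v]
    have h1 := norm_sub_le (T ^ 2 • v + (2 * (inner ℝ x v : ℝ)) • x)
      (Matrix.toEuclideanCLM (𝕜 := ℝ) Y v)
    have h2 := norm_add_le ((T ^ 2 : ℝ) • v) ((2 * (inner ℝ x v : ℝ)) • x)
    have h3 : |(inner ℝ x v : ℝ)| ≤ T * ‖v‖ := abs_real_inner_le_norm x v
    have h4 := hYle v
    have e1 : ‖(T ^ 2 : ℝ) • v‖ = T ^ 2 * ‖v‖ := by
      rw [norm_smul, Real.norm_eq_abs, abs_of_nonneg (sq_nonneg T)]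
    have e2 : ‖(2 * (inner ℝ x v : ℝ)) • x‖ = 2 * |(inner ℝ x v : ℝ)| * T := by
      rw [norm_smul, Real.norm_eq_abs, abs_mul, abs_two]
    nlinarith [norm_nonneg v]
  rcases le_or_gt T (2 * a) with hc | hc
  · -- small ‖x‖ case
    have h3 : 0 ≤ 3 / a * G := by positivity
    have : 3 * T ^ 2 + L ≤ 3 / a * G + 20 * a ^ 2 := by nlinarith
    linarith
  · -- large ‖x‖ case
    have h0 : 0 < T := by linarith
    set S := Real.sqrt (T ^ 4 + L ^ 2) with hS
    have hS0 : 0 ≤ S := Real.sqrt_nonneg _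
    have hS2 : S ^ 2 = T ^ 4 + L ^ 2 := Real.sq_sqrt (by positivity)
    have hrefined : N ≤ T ^ 2 + S + G / T := by
      apply ContinuousLinearMap.opNorm_le_bound _
        (by have := div_nonneg hG0 h0.le; nlinarith [sq_nonneg T])
      intro v
      set s : ℝ := (inner ℝ x v : ℝ) / T with hs
      obtain ⟨w, hw⟩ : ∃ w, w = v - (s / T) • x := ⟨_, rfl⟩
      have hsv : (inner ℝ x v : ℝ) = s * T := by rw [hs]; field_simp
      have hnv : ‖v‖ ^ 2 = s ^ 2 + ‖w‖ ^ 2 := by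
        have hv : v = (s / T) • x + w := by rw [hw]; abel
        have hns := norm_add_sq_real ((s / T) • x) w
        rw [← hv] at hns
        have hinner : (inner ℝ ((s / T) • x) w : ℝ) = 0 := by
          rw [real_inner_smul_left, hw, inner_sub_right, inner_smul_right,
            real_inner_self_eq_norm_sq, hsv]
          rw [← hTdef]
          field_simp
          ring
        have e : ‖(s / T) • x‖ ^ 2 = s ^ 2 := by
          rw [norm_smul, Real.norm_eq_abs, mul_pow, sq_abs, div_pow]
          field_simp
          rfl
        rw [hinner, e] at hns
        linarith
      have hs_abs : |s| ≤ ‖v‖ := by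
        have h1 : s ^ 2 ≤ ‖v‖ ^ 2 := by nlinarith [sq_nonneg ‖w‖]
        have := Real.sqrt_le_sqrt h1
        rwa [Real.sqrt_sq_eq_abs, Real.sqrt_sq (norm_nonneg v)] at this
      have hYx : Matrix.toEuclideanCLM (𝕜 := ℝ) Y x = T ^ 2 • x - g := by
        rw [hg]; abel
      have hid : Matrix.toEuclideanCLM (𝕜 := ℝ)
          (T ^ 2 • (1 : Matrix (Fin d) (Fin d) ℝ)
            + (2 : ℝ) • Matrix.vecMulVec (x : Fin d → ℝ) (x : Fin d → ℝ) - Y) v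
          = T ^ 2 • v + (s * T) • x + (s / T) • g
            - Matrix.toEuclideanCLM (𝕜 := ℝ) Y w := by
        rw [hM v, hsv]
        have hYv : Matrix.toEuclideanCLM (𝕜 := ℝ) Y v
            = (s / T) • (T ^ 2 • x - g) + Matrix.toEuclideanCLM (𝕜 := ℝ) Y w := by
          have hv : v = (s / T) • x + w := by rw [hw]; abel
          conv_lhs => rw [hv]
          rw [map_add, map_smul, hYx]
        rw [hYv]
        match_scalars <;> field_simp <;> ring
      have n1 : ‖(s * T) • x‖ = |s| * T ^ 2 := by
        rw [norm_smul, Real.norm_eq_abs, abs_mul, abs_of_nonneg h0.le]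
        ring
      have n2 : ‖(s / T) • g‖ = |s| * G / T := by
        rw [norm_smul, Real.norm_eq_abs, abs_div, abs_of_nonneg h0.le]
        ring
      have n3 := hYle w
      have n4 : ‖(T ^ 2 : ℝ) • v‖ = T ^ 2 * ‖v‖ := by
        rw [norm_smul, Real.norm_eq_abs, abs_of_nonneg (sq_nonneg T)]
      have cauchy : |s| * T ^ 2 + L * ‖w‖ ≤ S * ‖v‖ := by
        have hnn : 0 ≤ |s| * T ^ 2 + L * ‖w‖ := by positivity
        have hsq : (|s| * T ^ 2 + L * ‖w‖) ^ 2 ≤ (S * ‖v‖) ^ 2 := by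
          have e : (S * ‖v‖) ^ 2 = (T ^ 4 + L ^ 2) * (s ^ 2 + ‖w‖ ^ 2) := by
            rw [mul_pow, hS2, hnv]
          rw [e]
          nlinarith [sq_nonneg (T ^ 2 * ‖w‖ - L * |s|), sq_abs s]
        have := Real.sqrt_le_sqrt hsq
        rwa [Real.sqrt_sq hnn, Real.sqrt_sq (by positivity)] at this
      have hterm : |s| * G / T ≤ G / T * ‖v‖ := by
        have h1 : |s| * G ≤ ‖v‖ * G := mul_le_mul_of_nonneg_right hs_abs hG0
        calc |s| * G / T ≤ ‖v‖ * G / T := (div_le_div_iff_of_pos_right h0).mpr h1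
          _ = G / T * ‖v‖ := by ring
      have B1 := norm_sub_le (T ^ 2 • v + (s * T) • x + (s / T) • g)
        (Matrix.toEuclideanCLM (𝕜 := ℝ) Y w)
      have B2 := norm_add_le ((T ^ 2 : ℝ) • v + (s * T) • x) ((s / T) • g)
      have B3 := norm_add_le ((T ^ 2 : ℝ) • v) ((s * T) • x)
      rw [hid]
      rw [n1, n2, n4] at *
      nlinarith [norm_nonneg v]
      -- end of opNorm bound
    have haT : 0 < a * T := by positivity
    have hNa : N * (a * T) ≤ (T ^ 2 + S + G / T) * (a * T) :=
      mul_le_mul_of_nonneg_right hrefined haT.le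
    have hCT : (T ^ 2 + S + G / T) * (a * T) = (T ^ 3 + S * T + G) * a := by
      field_simp
    have hRT : (3 / a * G + 20 * a ^ 2) * (a * T) = 3 * G * T + 20 * a ^ 3 * T := by
      field_simp
    have hgoal : (T ^ 3 + S * T + G) * a ≤ 3 * G * T + 20 * a ^ 3 * T := by
      rcases le_or_gt (T ^ 2) (8 * a ^ 2) with h8 | h8
      · have hS12 : S ≤ 12 * a ^ 2 := by
          have h1 : S ^ 2 ≤ (12 * a ^ 2) ^ 2 := by nlinarith [sq_nonneg T]
          nlinarith [sq_nonneg a]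
        nlinarith [mul_le_mul_of_nonneg_left h8 (mul_nonneg ha0.le h0.le),
          mul_le_mul_of_nonneg_left hS12 (mul_nonneg ha0.le h0.le),
          mul_le_mul_of_nonneg_right (by linarith : a ≤ T) hG0]
      · have hS4 : S ≤ T ^ 2 + 4 * a ^ 2 := by
          have h1 : S ^ 2 ≤ (T ^ 2 + 4 * a ^ 2) ^ 2 := by nlinarith [sq_nonneg a, sq_nonneg T]
          nlinarith [sq_nonneg a, sq_nonneg T]
        have hGlb' : T ^ 3 - 8 * a ^ 2 * T ≤ G := by rw [hL8] at hGlb; linarith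
        have h3Ta : (0:ℝ) ≤ 3 * T - a := by linarith
        nlinarith [mul_le_mul_of_nonneg_left hS4 (mul_nonneg ha0.le h0.le),
          mul_le_mul_of_nonneg_left hGlb' h3Ta,
          mul_nonneg (mul_nonneg (by linarith : (0:ℝ) ≤ T - a)
            (by linarith : (0:ℝ) ≤ T ^ 2 - 8 * a ^ 2)) h0.le]
    have hfin : N * (a * T) ≤ (3 / a * G + 20 * a ^ 2) * (a * T) := by
      rw [← hCT, ← hRT] at hgoal
      linarith
    exact le_of_mul_le_mul_right hfin haT
end

section
/- Let f : ℝ^d → ℝ be three times continuously differentiable. If there exist H1 > 0, H2 ≥ 0, R > 0 such that ‖∇²f(y) − ∇²f(x)‖_op ≤ (H1 + H2‖∇f(x)‖)‖y − x‖ for all ‖y − x‖ ≤ R, then for every x ∈ ℝ^d, ‖∇³f(x)‖_F ≤ d^{3/2}(H1 + H2‖∇f(x)‖), where ‖∇³f(x)‖_F = (Σ_{i,j,k} |∂³f(x)/∂x_i∂x_j∂x_k|²)^{1/2}. -/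
theorem stmt_8 {d : ℕ} (f : EuclideanSpace ℝ (Fin d) → ℝ) (hf : ContDiff ℝ 3 f)
    (H1 H2 R : ℝ) (hH1 : 0 < H1) (hH2 : 0 ≤ H2) (hR : 0 < R)
    (hlip : ∀ x y : EuclideanSpace ℝ (Fin d), ‖y - x‖ ≤ R →
      ‖fderiv ℝ (gradient f) y - fderiv ℝ (gradient f) x‖ ≤
        (H1 + H2 * ‖gradient f x‖) * ‖y - x‖) :
    ∀ x : EuclideanSpace ℝ (Fin d),
      Real.sqrt (∑ i, ∑ j, ∑ k,
        (iteratedFDeriv ℝ 3 f x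
          ![EuclideanSpace.single i (1 : ℝ), EuclideanSpace.single j (1 : ℝ),
            EuclideanSpace.single k (1 : ℝ)]) ^ 2)
      ≤ (d : ℝ) ^ ((3 : ℝ) / 2) * (H1 + H2 * ‖gradient f x‖) := by
  intro x
  set L : ℝ := H1 + H2 * ‖gradient f x‖ with hLdef
  have hL : 0 ≤ L := by positivity
  set e : (EuclideanSpace ℝ (Fin d) →L[ℝ] ℝ) ≃ₗᵢ[ℝ] EuclideanSpace ℝ (Fin d) :=
    (InnerProductSpace.toDual ℝ (EuclideanSpace ℝ (Fin d))).symm with he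
  -- gradient f = e ∘ fderiv f
  have hgrad : gradient f = ⇑e ∘ fderiv ℝ f := rfl
  -- derivative of second derivative norm relation
  have hcomp : ∀ y : EuclideanSpace ℝ (Fin d), fderiv ℝ (gradient f) y =
      (e.toLinearIsometry.toContinuousLinearMap).comp (fderiv ℝ (fderiv ℝ f) y) := by
    intro y
    rw [hgrad, e.comp_fderiv]
    rfl
  have hnorm : ∀ y : EuclideanSpace ℝ (Fin d), ‖fderiv ℝ (gradient f) y - fderiv ℝ (gradient f) x‖ =
      ‖fderiv ℝ (fderiv ℝ f) y - fderiv ℝ (fderiv ℝ f) x‖ := by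
    intro y
    rw [hcomp, hcomp, ← ContinuousLinearMap.comp_sub,
      e.toLinearIsometry.norm_toContinuousLinearMap_comp]
  -- the second derivative is C¹
  have hB : ContDiff ℝ 1 (fderiv ℝ (fderiv ℝ f)) := by
    have h2 : ContDiff ℝ 2 (fderiv ℝ f) := hf.fderiv_right (by norm_num)
    exact h2.fderiv_right (by norm_num)
  set T := fderiv ℝ (fderiv ℝ (fderiv ℝ f)) x with hTdef
  have hT : HasFDerivAt (fderiv ℝ (fderiv ℝ f)) T x :=
    (hB.differentiable one_ne_zero x).hasFDerivAt
  letI : NormedAddCommGroup (EuclideanSpace ℝ (Fin d) →L[ℝ] EuclideanSpace ℝ (Fin d) →L[ℝ] ℝ) := inferInstance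
  letI : NormedSpace ℝ (EuclideanSpace ℝ (Fin d) →L[ℝ] EuclideanSpace ℝ (Fin d) →L[ℝ] ℝ) := inferInstance
  have hTle : ‖T‖ ≤ L := by
    apply hT.le_of_lip' hL
    have hball : Metric.closedBall x R ∈ nhds x := Metric.closedBall_mem_nhds x hR
    filter_upwards [hball] with y hy
    have : ‖y - x‖ ≤ R := by
      rw [← dist_eq_norm]; exact hy
    have := hlip x y this
    rw [hnorm] at this
    exact this
  -- pointwise bound
  have hpt : ∀ i j k : Fin d,
      (iteratedFDeriv ℝ 3 f x
        ![EuclideanSpace.single i (1 : ℝ), EuclideanSpace.single j (1 : ℝ),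
          EuclideanSpace.single k (1 : ℝ)]) ^ 2 ≤ L ^ 2 := by
    intro i j k
    set u := EuclideanSpace.single i (1 : ℝ)
    set v := EuclideanSpace.single j (1 : ℝ)
    set w := EuclideanSpace.single k (1 : ℝ)
    have hval : iteratedFDeriv ℝ 3 f x ![u, v, w] = T u v w := by
      rw [iteratedFDeriv_succ_apply_right, iteratedFDeriv_two_apply]
      congr 1
    have hu : ‖u‖ = 1 := by simp [u, EuclideanSpace.norm_single]
    have hv : ‖v‖ = 1 := by simp [v, EuclideanSpace.norm_single]
    have hw : ‖w‖ = 1 := by simp [w, EuclideanSpace.norm_single]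
    have habs : |iteratedFDeriv ℝ 3 f x ![u, v, w]| ≤ L := by
      rw [hval, ← Real.norm_eq_abs]
      calc ‖T u v w‖ ≤ ‖T u v‖ * ‖w‖ := (T u v).le_opNorm w
        _ = ‖T u v‖ := by rw [hw, mul_one]
        _ ≤ ‖T u‖ * ‖v‖ := (T u).le_opNorm v
        _ = ‖T u‖ := by rw [hv, mul_one]
        _ ≤ ‖T‖ * ‖u‖ := T.le_opNorm u
        _ = ‖T‖ := by rw [hu, mul_one]
        _ ≤ L := hTle
    calc (iteratedFDeriv ℝ 3 f x ![u, v, w]) ^ 2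
        = |iteratedFDeriv ℝ 3 f x ![u, v, w]| ^ 2 := (sq_abs _).symm
      _ ≤ L ^ 2 := by gcongr
  -- sum bound
  have hsum : (∑ i, ∑ j, ∑ k,
      (iteratedFDeriv ℝ 3 f x
        ![EuclideanSpace.single i (1 : ℝ), EuclideanSpace.single j (1 : ℝ),
          EuclideanSpace.single k (1 : ℝ)]) ^ 2) ≤ (d : ℝ) ^ 3 * L ^ 2 := by
    calc (∑ i, ∑ j, ∑ k, (iteratedFDeriv ℝ 3 f x
          ![EuclideanSpace.single i (1 : ℝ), EuclideanSpace.single j (1 : ℝ),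
            EuclideanSpace.single k (1 : ℝ)]) ^ 2)
        ≤ ∑ _i : Fin d, ∑ _j : Fin d, ∑ _k : Fin d, L ^ 2 := by
          apply Finset.sum_le_sum; intro i _
          apply Finset.sum_le_sum; intro j _
          apply Finset.sum_le_sum; intro k _
          exact hpt i j k
      _ = (d : ℝ) ^ 3 * L ^ 2 := by
          simp [Finset.sum_const, Finset.card_univ]; ring
  calc Real.sqrt (∑ i, ∑ j, ∑ k,
        (iteratedFDeriv ℝ 3 f x
          ![EuclideanSpace.single i (1 : ℝ), EuclideanSpace.single j (1 : ℝ),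
            EuclideanSpace.single k (1 : ℝ)]) ^ 2)
      ≤ Real.sqrt ((d : ℝ) ^ 3 * L ^ 2) := Real.sqrt_le_sqrt hsum
    _ = (d : ℝ) ^ ((3 : ℝ) / 2) * L := by
        rw [Real.sqrt_mul (by positivity), Real.sqrt_sq hL]
        congr 1
        rw [Real.sqrt_eq_rpow, ← Real.rpow_natCast (d : ℝ) 3,
          ← Real.rpow_mul (by positivity)]
        norm_num
end
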